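/- arXiv:2010.04749 — 2 statements merged into one kernel-verified Lean document; each statement's English description precedes it below -/
import Mathlib

section
/- Canonical heap trace simulation: if gmod(P, ρwit(σ), τ, ppos, cpos) with a token at ppos, plus a heap g dead for ppos, executes a trace τ' reaching state ho, where τ·τ' is a prefix of σ and ppos ≤ cpos, then there exist a process P', positions ppos' ≤ cpos', and a heap g' dead for ppos' such that P →τ' P' and ho = gmod(P', ρwit(σ), τ·τ', ppos', cpos') with a token at ppos', plus g'. In particular ho ≠ ⊥. -/
/-! ## Event systems -/

/-- Event systems: labeled transition systems. -/
structure ES (S E : Type) where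
  trans : S → E → S → Prop

namespace ES

/-- Extension of the transition relation to finite sequences of events. -/
inductive mtrans {S E : Type} (M : ES S E) : S → List E → S → Prop
  | nil (s : S) : mtrans M s [] s
  | snoc {s s' s'' : S} {τ : List E} {e : E} :
      mtrans M s τ s' → M.trans s' e s'' → mtrans M s (τ ++ [e]) s''

/-- The traces of an event system starting from a set of initial states. -/
def traces {S E : Type} (M : ES S E) (I : Set S) : Set (List E) :=
  {τ | ∃ s ∈ I, ∃ s', M.mtrans s τ s'}

/-- Traces starting from a single state. -/
def tracesFrom {S E : Type} (M : ES S E) (s : S) : Set (List E) :=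
  M.traces {s}

end ES

/-! ## Chunks and heaps -/

/-- Chunks: I/O permissions `bio(t, v, w, t')` and tokens `token(t)`. -/
inductive Chunk (B V Pl : Type) : Type
  | bio (b : B) (t : Pl) (v w : V) (t' : Pl)
  | token (t : Pl)

/-- Heaps are (possibly infinite) multisets of chunks, i.e. functions to `ℕ∞`. -/
abbrev Heap (B V Pl : Type) := Chunk B V Pl → ℕ∞

open Classical in
/-- The singleton heap containing one chunk. -/
noncomputable def Heap.single {B V Pl : Type} (c : Chunk B V Pl) : Heap B V Pl :=
  fun c' => if c' = c then 1 else 0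

/-- Well-typedness of a chunk w.r.t. a typing function `Ty`. -/
def Chunk.wellTyped {B V Pl : Type} (Ty : B → V → Set V) : Chunk B V Pl → Prop
  | .bio b _ v w _ => w ∈ Ty b v
  | .token _ => True

/-! ## Assertions (coinductive, as an M-type) -/

/-- Heads of the assertion functor. -/
inductive AssnHead (B V Pl : Type) : Type
  | bool (b : Bool)
  | chunk (c : Chunk B V Pl)
  | star
  | exv
  | expl

/-- Arities (branching types) of the assertion functor. -/
def AssnAr (B V Pl : Type) : AssnHead B V Pl → Type
  | .bool _ => Empty
  | .chunk _ => Empty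
  | .star => Bool
  | .exv => V
  | .expl => Pl

/-- The assertion polynomial functor. -/
def AssnF (B V Pl : Type) : PFunctor := ⟨AssnHead B V Pl, AssnAr B V Pl⟩

/-- Coinductive separation logic assertions:
`φ ::=ν b | c | φ₁ ⋆ φ₂ | ∃v. φ | ∃t. φ`. -/
def Assn (B V Pl : Type) : Type := (AssnF B V Pl).M

namespace Assn

variable {B V Pl : Type}

/-- Boolean assertion. -/
def mkBool (b : Bool) : Assn B V Pl := PFunctor.M.mk ⟨.bool b, fun e => e.elim⟩

/-- Chunk assertion. -/
def mkChunk (c : Chunk B V Pl) : Assn B V Pl := PFunctor.M.mk ⟨.chunk c, fun e => e.elim⟩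

/-- Separating conjunction. -/
def star (φ ψ : Assn B V Pl) : Assn B V Pl :=
  PFunctor.M.mk ⟨.star, fun x : Bool => if x then φ else ψ⟩

/-- Existential quantification over values. -/
def exv (f : V → Assn B V Pl) : Assn B V Pl := PFunctor.M.mk ⟨.exv, f⟩

/-- Existential quantification over places. -/
def expl (f : Pl → Assn B V Pl) : Assn B V Pl := PFunctor.M.mk ⟨.expl, f⟩

end Assn

/-- One step of the satisfaction relation. -/
def SatF {B V Pl : Type} (Ty : B → V → Set V)
    (R : Heap B V Pl → Assn B V Pl → Prop) (h : Heap B V Pl) (φ : Assn B V Pl) : Prop :=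
  match PFunctor.M.dest φ with
  | ⟨.bool b, _⟩ => b = true
  | ⟨.chunk c, _⟩ => 0 < h c ∧ c.wellTyped Ty
  | ⟨.star, f⟩ => ∃ h1 h2, h = h1 + h2 ∧ R h1 (f true) ∧ R h2 (f false)
  | ⟨.exv, f⟩ => ∃ v, R h (f v)
  | ⟨.expl, f⟩ => ∃ t, R h (f t)

/-- Coinductive satisfaction relation `h ⊨ φ`, as the greatest fixed point
of `SatF` (defined as the union of all post-fixed points). -/
def sat {B V Pl : Type} (Ty : B → V → Set V) (h : Heap B V Pl) (φ : Assn B V Pl) : Prop :=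
  ∃ R, (∀ h' φ', R h' φ' → SatF Ty R h' φ') ∧ R h φ

/-! ## Heap transition system -/

/-- The heap transition system over `Option Heap` (`none` is the chaotic state ⊥),
with rules Bio, Contradict, and Chaos. -/
inductive HTrans {B V Pl : Type} (Ty : B → V → Set V) :
    Option (Heap B V Pl) → B × V × V → Option (Heap B V Pl) → Prop
  | bio {b : B} {v w : V} {t t' : Pl} {h : Heap B V Pl} :
      w ∈ Ty b v →
      HTrans Ty (some (Heap.single (.token t) + Heap.single (.bio b t v w t') + h)) (b, v, w)
        (some (Heap.single (.token t') + h))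
  | contradict {b : B} {v w w' : V} {t t' : Pl} {h : Heap B V Pl} :
      w ≠ w' → w ∈ Ty b v → w' ∈ Ty b v →
      HTrans Ty (some (Heap.single (.token t) + Heap.single (.bio b t v w t') + h)) (b, v, w')
        none
  | chaos {b : B} {v w : V} : w ∈ Ty b v → HTrans Ty none (b, v, w) none

/-- The heap transition system as an event system. -/
def hES {B V Pl : Type} (Ty : B → V → Set V) : ES (Option (Heap B V Pl)) (B × V × V) :=
  ⟨HTrans Ty⟩

/-- Traces executable in all heaps of a set of heaps. -/
def tracesH {B V Pl : Type} (Ty : B → V → Set V) (H : Set (Heap B V Pl)) :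
    Set (List (B × V × V)) :=
  {τ | ∀ h ∈ H, τ ∈ (hES Ty).tracesFrom (some h)}

/-- Traces of an assertion: traces executable in all its heap models. -/
def tracesHA {B V Pl : Type} (Ty : B → V → Set V) (φ : Assn B V Pl) :
    Set (List (B × V × V)) :=
  tracesH Ty {h | sat Ty h φ}

/-! ## Processes (coinductive, as an M-type) -/

/-- Heads of the process functor. -/
inductive ProcHead (B V : Type) : Type
  | null
  | pre (b : B) (v : V)
  | choice

/-- Arities of the process functor. -/
def ProcAr (B V : Type) : ProcHead B V → Type
  | .null => Empty
  | .pre _ _ => V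
  | .choice => Bool

/-- The process polynomial functor. -/
def ProcF (B V : Type) : PFunctor := ⟨ProcHead B V, ProcAr B V⟩

/-- Coinductive processes: `P ::=ν Null | bio(v, z).P | P₁ ⊕ P₂`. -/
def Proc (B V : Type) : Type := (ProcF B V).M

namespace Proc

variable {B V : Type}

/-- The inactive process. -/
def null : Proc B V := PFunctor.M.mk ⟨.null, fun e => e.elim⟩

/-- Prefixing with an I/O operation, binding the input in the continuation. -/
def pre (b : B) (v : V) (k : V → Proc B V) : Proc B V := PFunctor.M.mk ⟨.pre b v, k⟩

/-- Binary choice. -/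
def choice (P Q : Proc B V) : Proc B V :=
  PFunctor.M.mk ⟨.choice, fun x : Bool => if x then P else Q⟩

end Proc

/-- Operational semantics of processes (rules Pref and Choice). -/
inductive PTrans {B V : Type} (Ty : B → V → Set V) : Proc B V → B × V × V → Proc B V → Prop
  | pref {P : Proc B V} {b : B} {v w : V} {k : V → Proc B V} :
      w ∈ Ty b v → PFunctor.M.dest P = ⟨.pre b v, k⟩ → PTrans Ty P (b, v, w) (k w)
  | chl {P P' : Proc B V} {a : B × V × V} {f : Bool → Proc B V} :
      PFunctor.M.dest P = ⟨.choice, f⟩ → PTrans Ty (f true) a P' → PTrans Ty P a P'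
  | chr {P P' : Proc B V} {a : B × V × V} {f : Bool → Proc B V} :
      PFunctor.M.dest P = ⟨.choice, f⟩ → PTrans Ty (f false) a P' → PTrans Ty P a P'

/-- The process operational semantics as an event system. -/
def pES {B V : Type} (Ty : B → V → Set V) : ES (Proc B V) (B × V × V) := ⟨PTrans Ty⟩

/-- Countable (ℕ-indexed) choice, defined corecursively from binary choice. -/
def vchoice {B V : Type} (f : ℕ → Proc B V) : Proc B V :=
  PFunctor.M.corec
    (fun s : Proc B V ⊕ ℕ =>
      match s with
      | .inl p => ⟨(PFunctor.M.dest p).1, fun x => Sum.inl ((PFunctor.M.dest p).2 x)⟩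
      | .inr n => ⟨.choice, fun x : Bool => if x then Sum.inl (f n) else Sum.inr (n + 1)⟩)
    (Sum.inr 0)

/-! ## Embedding of processes into assertions -/

/-- States of the corecursion defining the embedding `emb`. -/
inductive EmbSt (B V Pl : Type) : Type
  | proc (P : Proc B V) (t : Pl)
  | ex1 (b : B) (v : V) (k : V → Proc B V) (t t' : Pl)
  | star1 (b : B) (v : V) (k : V → Proc B V) (t t' : Pl) (z : V)
  | leafChunk (c : Chunk B V Pl)

/-- One step of the corecursion defining the embedding `emb`. -/
def embStep {B V Pl : Type} : EmbSt B V Pl → (AssnF B V Pl).Obj (EmbSt B V Pl)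
  | .proc P t =>
    match PFunctor.M.dest P with
    | ⟨.null, _⟩ => ⟨.bool true, fun e => e.elim⟩
    | ⟨.pre b v, k⟩ => ⟨.expl, fun t' => .ex1 b v k t t'⟩
    | ⟨.choice, f⟩ => ⟨.star, fun x : Bool => .proc (f x) t⟩
  | .ex1 b v k t t' => ⟨.exv, fun z => .star1 b v k t t' z⟩
  | .star1 b v k t t' z =>
      ⟨.star, fun x : Bool => if x then .leafChunk (.bio b t v z t') else .proc (k z) t'⟩
  | .leafChunk c => ⟨.chunk c, fun e => e.elim⟩

/-- The embedding `emb(P, t)` of a process and a place into an assertion: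
`emb(Null, t) = true`, `emb(bio(v,z).P, t) = ∃t',z'. bio(t,v,z',t') ⋆ emb(P[z'/z], t')`,
`emb(P₁ ⊕ P₂, t) = emb(P₁, t) ⋆ emb(P₂, t)`. -/
def embA {B V Pl : Type} (P : Proc B V) (t : Pl) : Assn B V Pl :=
  PFunctor.M.corec embStep (.proc P t)

/-- The process assertion `emb(P) = ∃t. token(t) ⋆ emb(P, t)`. -/
def procAssn {B V : Type} (Pl : Type) (P : Proc B V) : Assn B V Pl :=
  Assn.expl (fun t => Assn.star (Assn.mkChunk (.token t)) (embA P t))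

/-- ℕ-indexed iterated separating conjunction, defined corecursively. -/
def AllStar {B V Pl : Type} (f : ℕ → Assn B V Pl) : Assn B V Pl :=
  PFunctor.M.corec
    (fun s : Assn B V Pl ⊕ ℕ =>
      match s with
      | .inl a => ⟨(PFunctor.M.dest a).1, fun x => Sum.inl ((PFunctor.M.dest a).2 x)⟩
      | .inr n => ⟨.star, fun x : Bool => if x then Sum.inl (f n) else Sum.inr (n + 1)⟩)
    (Sum.inr 0)

/-! ## I/O-guarded event systems and their translation to processes -/

/-- An I/O-guarded event system: guards depend only on the state and the output,
updates compute the next state from output and input. -/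
structure IOGES (B V S : Type) where
  guard : B → V → S → Prop
  update : B → V → V → S → S

/-- The event system associated with an I/O-guarded event system:
`s →bio(v,w) s'` iff the guard holds, `w ∈ Ty(bio, v)`, and `s' = U(s)`. -/
def IOGES.es {B V S : Type} (G : IOGES B V S) (Ty : B → V → Set V) : ES S (B × V × V) :=
  ⟨fun s a s' => G.guard a.1 a.2.1 s ∧ a.2.2 ∈ Ty a.1 a.2.1 ∧
      s' = G.update a.1 a.2.1 a.2.2 s⟩

/-- States of the corecursion defining `proc(G, s)`. -/
inductive PrSt (S : Type) : Type
  | spine (n : ℕ) (s : S)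
  | item (n : ℕ) (s : S)

open Classical in
/-- The corecursive translation `proc(G, s)` of an I/O-guarded event system into
a process: the countable choice over all `bio ∈ Bios` and outputs `v` whose guard
holds in `s` of the prefixed processes `bio(v, z). proc(G, U_{bio(v,z)}(s))`,
via an enumeration `e` of the pairs `(bio, v)`. -/
noncomputable def procOf {B V S : Type} (e : ℕ → B × V) (G : IOGES B V S) (s : S) :
    Proc B V :=
  PFunctor.M.corec
    (fun st : PrSt S =>
      match st with
      | .spine n s => ⟨.choice, fun x : Bool => if x then .item n s else .spine (n + 1) s⟩
      | .item n s =>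
          if G.guard (e n).1 (e n).2 s then
            ⟨.pre (e n).1 (e n).2, fun w => .spine 0 (G.update (e n).1 (e n).2 w s)⟩
          else ⟨.null, fun x => x.elim⟩)
    (.spine 0 s)

/-! ## Canonical heap models -/

open Classical in
/-- The I/O permission (as a singleton heap, or the empty heap) found at position
`pos` of process `P` under input schedule `ρ`, with previous place `pp`,
current position `cp`, and traversed trace `τ`. -/
noncomputable def pm {B V : Type} (ρ : List (B × V × V) → B → V → V) :
    Proc B V → List (B × V × V) → List Bool → List Bool → List Bool →
      Heap B V (List Bool)
  | P, τ, pp, cp, [] =>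
    (match PFunctor.M.dest P with
     | ⟨.pre b v, _⟩ => Heap.single (Chunk.bio b pp v (ρ τ b v) (cp ++ [true]))
     | _ => 0)
  | P, τ, pp, cp, d :: pos =>
    (match PFunctor.M.dest P, d with
     | ⟨.pre b v, k⟩, true =>
         pm ρ (k (ρ τ b v)) (τ ++ [(b, v, ρ τ b v)]) (cp ++ [true]) (cp ++ [true]) pos
     | ⟨.choice, f⟩, d' => pm ρ (f d') τ pp (cp ++ [d']) pos
     | _, _ => 0)

/-- Pointwise (possibly infinite) sum of a family of heaps. -/
noncomputable def hSum {B V Pl ι : Type} (f : ι → Heap B V Pl) : Heap B V Pl :=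
  fun c => ⨆ F : Finset ι, ∑ i ∈ F, f i c

/-- The canonical model construction `gmod(P, ρ, τ, ppos, cpos)`: the multiset
sum of `pm(P, ρ, τ, ppos, cpos, pos)` over all positions `pos`. -/
noncomputable def gmod {B V : Type} (ρ : List (B × V × V) → B → V → V)
    (P : Proc B V) (τ : List (B × V × V)) (pp cp : List Bool) :
    Heap B V (List Bool) :=
  hSum (fun pos : List Bool => pm ρ P τ pp cp pos)

/-- Well-typedness of an input schedule. -/
def schedWT {B V : Type} (Ty : B → V → Set V) (ρ : List (B × V × V) → B → V → V) : Prop :=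
  ∀ τ b v, ρ τ b v ∈ Ty b v

/-- The canonical model `cmod(P, ρ) = gmod(P, ρ, [], [], [])`. -/
noncomputable def cmod {B V : Type} (ρ : List (B × V × V) → B → V → V) (P : Proc B V) :
    Heap B V (List Bool) :=
  gmod ρ P [] [] []

/-- The canonical model with a token added at the previous place. -/
noncomputable def gmodTok {B V : Type} (ρ : List (B × V × V) → B → V → V)
    (P : Proc B V) (τ : List (B × V × V)) (pp cp : List Bool) :
    Heap B V (List Bool) :=
  Heap.single (Chunk.token pp) + gmod ρ P τ pp cp

/-- The set `can(P)` of token-added canonical models over all well-typed schedules. -/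
def canSet {B V : Type} (Ty : B → V → Set V) (P : Proc B V) :
    Set (Heap B V (List Bool)) :=
  {h | ∃ ρ, schedWT Ty ρ ∧ h = Heap.single (Chunk.token []) + cmod ρ P}

/-- The set of source places of I/O permissions in a heap. -/
def srcplaces {B V Pl : Type} (h : Heap B V Pl) : Set Pl :=
  {t | ∃ b v w t', 0 < h (Chunk.bio b t v w t')}

/-- A heap is dead for a position if it has no tokens and no source place
extending the position. -/
def deadFor {B V : Type} (pos : List Bool) (h : Heap B V (List Bool)) : Prop :=
  (∀ t, h (Chunk.token t) = 0) ∧ ∀ p' ∈ srcplaces h, ¬ pos <+: p'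

open Classical in
/-- The witness schedule `ρwit(σ)`: for proper prefixes `τ` of `σ`, return the
input of the next matching action of `σ`; otherwise an arbitrary well-typed value
(given by `pick`). -/
noncomputable def rhoWit {B V : Type} (pick : B → V → V) (σ : List (B × V × V)) :
    List (B × V × V) → B → V → V :=
  fun τ b v =>
    if h : ∃ w, ∃ rest, τ <+: σ ∧ σ.drop τ.length = (b, v, w) :: rest
    then h.choose
    else pick b v

section Helpers

open Classical

variable {B V Pl ι κ : Type}

/-! ### `hSum` lemmas -/

lemma hSum_apply (f : ι → Heap B V Pl) (c : Chunk B V Pl) :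
    hSum f c = ⨆ F : Finset ι, ∑ i ∈ F, f i c := rfl

lemma hSum_apply_eq_zero {f : ι → Heap B V Pl} {c : Chunk B V Pl}
    (h : ∀ i, f i c = 0) : hSum f c = 0 := by
  rw [hSum_apply]
  simp only [h, Finset.sum_const_zero, iSup_const]

lemma exists_pos_of_hSum_pos {f : ι → Heap B V Pl} {c : Chunk B V Pl}
    (h : 0 < hSum f c) : ∃ i, 0 < f i c := by
  by_contra hc
  push_neg at hc
  have hc' : ∀ i, f i c = 0 := fun i => le_antisymm (hc i) zero_le
  rw [hSum_apply_eq_zero hc'] at h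
  exact lt_irrefl 0 h

lemma hSum_add (f g : ι → Heap B V Pl) :
    hSum (fun i => f i + g i) = hSum f + hSum g := by
  funext c
  apply le_antisymm
  · refine iSup_le fun F => ?_
    simp only [Pi.add_apply, Finset.sum_add_distrib]
    exact add_le_add (le_iSup (fun F : Finset ι => ∑ i ∈ F, f i c) F)
      (le_iSup (fun F : Finset ι => ∑ i ∈ F, g i c) F)
  · show hSum f c + hSum g c ≤ _
    rw [hSum_apply, hSum_apply, ENat.iSup_add]
    refine iSup_le fun F => ?_
    rw [ENat.add_iSup]
    refine iSup_le fun G => ?_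
    refine le_trans ?_ (le_iSup (fun F : Finset ι => ∑ i ∈ F, (f i + g i) c) (F ∪ G))
    have h1 : ∑ i ∈ F, f i c ≤ ∑ i ∈ F ∪ G, f i c :=
      Finset.sum_le_sum_of_subset (Finset.subset_union_left)
    have h2 : ∑ i ∈ G, g i c ≤ ∑ i ∈ F ∪ G, g i c :=
      Finset.sum_le_sum_of_subset (Finset.subset_union_right)
    calc ∑ i ∈ F, f i c + ∑ i ∈ G, g i c
        ≤ ∑ i ∈ F ∪ G, f i c + ∑ i ∈ F ∪ G, g i c := add_le_add h1 h2
      _ = ∑ i ∈ F ∪ G, (f i + g i) c := by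
          simp [Finset.sum_add_distrib]

lemma hSum_ite_eq [DecidableEq ι] (a : ι) (f : ι → Heap B V Pl) :
    hSum (fun i => if i = a then f i else 0) = f a := by
  funext c
  apply le_antisymm
  · refine iSup_le fun F => ?_
    have : ∀ i, (if i = a then f i else 0) c = if i = a then f i c else 0 := by
      intro i; split <;> rfl
    simp only [this, Finset.sum_ite_eq' F a (fun i => f i c)]
    split <;> simp
  · refine le_trans ?_ (le_iSup (fun F : Finset ι => ∑ i ∈ F, (if i = a then f i else 0) c) {a})
    simp

lemma hSum_comp_inj (e : κ → ι) (he : Function.Injective e) (f : ι → Heap B V Pl)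
    (h0 : ∀ i, i ∉ Set.range e → f i = 0) : hSum f = hSum fun k => f (e k) := by
  funext c
  apply le_antisymm
  · refine iSup_le fun F => ?_
    refine le_trans ?_ (le_iSup (fun G : Finset κ => ∑ k ∈ G, f (e k) c) (F.preimage e he.injOn))
    rw [Finset.sum_preimage e F he.injOn (fun i => f i c)
      (fun i _ hi => by show f i c = 0; rw [h0 i hi]; rfl)]
  · refine iSup_le fun G => ?_
    refine le_trans ?_ (le_iSup (fun F : Finset ι => ∑ i ∈ F, f i c) (G.image e))
    rw [Finset.sum_image (fun x _ y _ h => he h)]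

lemma hSum_split (p : ι → Prop) [DecidablePred p] (f : ι → Heap B V Pl) :
    hSum f = hSum (fun i => if p i then f i else 0) +
      hSum (fun i => if p i then 0 else f i) := by
  have hf : f = fun i => (if p i then f i else 0) + (if p i then 0 else f i) := by
    funext i
    by_cases hp : p i <;> simp [hp]
  exact (congrArg hSum hf).trans
    (hSum_add (fun i => if p i then f i else 0) (fun i => if p i then 0 else f i))

/-! ### choice paths -/

/-- A path of choices through a process reaching a prefix node. -/
inductive ChoicePath {B V : Type} : Proc B V → List Bool → B → V → (V → Proc B V) → Prop
  | here {P : Proc B V} {b : B} {v : V} {k : V → Proc B V} :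
      PFunctor.M.dest P = ⟨.pre b v, k⟩ → ChoicePath P [] b v k
  | step {P : Proc B V} {f : Bool → Proc B V} {d : Bool} {pos : List Bool} {b : B} {v : V}
      {k : V → Proc B V} :
      PFunctor.M.dest P = ⟨.choice, f⟩ → ChoicePath (f d) pos b v k →
        ChoicePath P (d :: pos) b v k

lemma ChoicePath.ptrans {B V : Type} {Ty : B → V → Set V} {P : Proc B V} {pos : List Bool}
    {b : B} {v : V} {k : V → Proc B V} (h : ChoicePath P pos b v k) :
    ∀ {w : V}, w ∈ Ty b v → PTrans Ty P (b, v, w) (k w) := by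
  induction h with
  | here hP => exact fun hw => .pref hw hP
  | @step P f d pos b v k hP _ ih =>
    intro w hw
    cases d
    · exact .chr hP (ih hw)
    · exact .chl hP (ih hw)

/-! ### `pm` lemmas -/

variable {ρ : List (B × V × V) → B → V → V}

lemma pm_nil_pre {P : Proc B V} {b : B} {v : V} {k : V → Proc B V}
    (hP : PFunctor.M.dest P = ⟨.pre b v, k⟩) (τ : List (B × V × V)) (pp cp : List Bool) :
    pm ρ P τ pp cp [] = Heap.single (.bio b pp v (ρ τ b v) (cp ++ [true])) := by
  simp [pm, hP]

lemma pm_nil_null {P : Proc B V} {k : Empty → Proc B V}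
    (hP : PFunctor.M.dest P = ⟨.null, k⟩) (τ : List (B × V × V)) (pp cp : List Bool) :
    pm ρ P τ pp cp [] = 0 := by
  simp [pm, hP]

lemma pm_nil_choice {P : Proc B V} {f : Bool → Proc B V}
    (hP : PFunctor.M.dest P = ⟨.choice, f⟩) (τ : List (B × V × V)) (pp cp : List Bool) :
    pm ρ P τ pp cp [] = 0 := by
  simp [pm, hP]

lemma pm_cons_pre_true {P : Proc B V} {b : B} {v : V} {k : V → Proc B V}
    (hP : PFunctor.M.dest P = ⟨.pre b v, k⟩) (τ : List (B × V × V)) (pp cp pos : List Bool) :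
    pm ρ P τ pp cp (true :: pos) =
      pm ρ (k (ρ τ b v)) (τ ++ [(b, v, ρ τ b v)]) (cp ++ [true]) (cp ++ [true]) pos := by
  simp [pm, hP]

lemma pm_cons_pre_false {P : Proc B V} {b : B} {v : V} {k : V → Proc B V}
    (hP : PFunctor.M.dest P = ⟨.pre b v, k⟩) (τ : List (B × V × V)) (pp cp pos : List Bool) :
    pm ρ P τ pp cp (false :: pos) = 0 := by
  simp [pm, hP]

lemma pm_cons_null {P : Proc B V} {k : Empty → Proc B V}
    (hP : PFunctor.M.dest P = ⟨.null, k⟩) (τ : List (B × V × V)) (pp cp : List Bool)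
    (d : Bool) (pos : List Bool) : pm ρ P τ pp cp (d :: pos) = 0 := by
  cases d <;> simp [pm, hP]

lemma pm_cons_choice {P : Proc B V} {f : Bool → Proc B V}
    (hP : PFunctor.M.dest P = ⟨.choice, f⟩) (τ : List (B × V × V)) (pp cp : List Bool)
    (d : Bool) (pos : List Bool) :
    pm ρ P τ pp cp (d :: pos) = pm ρ (f d) τ pp (cp ++ [d]) pos := by
  cases d <;> simp [pm, hP]

lemma pm_token (P : Proc B V) (τ : List (B × V × V)) (pp cp pos : List Bool)
    (t : List Bool) : pm ρ P τ pp cp pos (.token t) = 0 := by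
  induction pos generalizing P τ pp cp with
  | nil =>
    rcases hP : PFunctor.M.dest P with ⟨hd, k⟩
    cases hd with
    | null => rw [pm_nil_null hP]; rfl
    | pre b v => rw [pm_nil_pre hP]; simp [Heap.single]
    | choice => rw [pm_nil_choice hP]; rfl
  | cons d pos ih =>
    rcases hP : PFunctor.M.dest P with ⟨hd, k⟩
    cases hd with
    | null => rw [pm_cons_null hP]; rfl
    | pre b v =>
      cases d
      · rw [pm_cons_pre_false hP]; rfl
      · rw [pm_cons_pre_true hP]; exact ih _ _ _ _
    | choice => rw [pm_cons_choice hP]; exact ih _ _ _ _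

lemma pm_bio_char {P : Proc B V} {τ : List (B × V × V)} {pp cp pos : List Bool}
    {b : B} {t : List Bool} {v w : V} {t' : List Bool}
    (hpc : pp <+: cp) (h : 0 < pm ρ P τ pp cp pos (.bio b t v w t')) :
    (t = pp ∧ ∃ k, ChoicePath P pos b v k ∧ w = ρ τ b v ∧ t' = cp ++ pos ++ [true]) ∨
    (∃ q : List Bool, q ++ [true] <+: pos ∧ t = cp ++ q ++ [true]) := by
  induction pos generalizing P τ pp cp with
  | nil =>
    rcases hP : PFunctor.M.dest P with ⟨hd, k⟩
    cases hd with
    | pre b0 v0 =>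
      rw [pm_nil_pre hP] at h
      simp only [Heap.single] at h
      split at h
      · rename_i hc
        rw [Chunk.bio.injEq] at hc
        obtain ⟨hb, ht, hv, hw, ht'⟩ := hc
        subst hb; subst ht; subst hv; subst hw; subst ht'
        exact Or.inl ⟨rfl, k, .here hP, rfl, by simp⟩
      · exact absurd h (lt_irrefl 0)
    | null => rw [pm_nil_null hP] at h; exact absurd h (lt_irrefl 0)
    | choice => rw [pm_nil_choice hP] at h; exact absurd h (lt_irrefl 0)
  | cons d pos ih =>
    rcases hP : PFunctor.M.dest P with ⟨hd, k⟩
    cases hd with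
    | pre b0 v0 =>
      cases d with
      | false => rw [pm_cons_pre_false hP] at h; exact absurd h (lt_irrefl 0)
      | true =>
        rw [pm_cons_pre_true hP] at h
        rcases ih (List.prefix_refl _) h with ⟨ht, _⟩ | ⟨q, hq, ht⟩
        · exact Or.inr ⟨[], ⟨pos, by simp⟩, by simpa using ht⟩
        · refine Or.inr ⟨true :: q, ?_, by simpa using ht⟩
          rw [List.cons_append, List.cons_prefix_cons]
          exact ⟨rfl, hq⟩
    | null => rw [pm_cons_null hP] at h; exact absurd h (lt_irrefl 0)
    | choice =>
      rw [pm_cons_choice hP] at h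
      have hpc' : pp <+: cp ++ [d] := hpc.trans (List.prefix_append _ _)
      rcases ih hpc' h with ⟨ht, k', hcp, hw, ht'⟩ | ⟨q, hq, ht⟩
      · refine Or.inl ⟨ht, k', .step hP hcp, hw, ?_⟩
        rw [ht']; simp
      · refine Or.inr ⟨d :: q, ?_, by simpa using ht⟩
        rw [List.cons_append, List.cons_prefix_cons]
        exact ⟨rfl, hq⟩

lemma pm_at_choicePath {P : Proc B V} {pos : List Bool} {b : B} {v : V}
    {k : V → Proc B V} (h : ChoicePath P pos b v k) (τ : List (B × V × V))
    (pp cp : List Bool) :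
    pm ρ P τ pp cp pos = Heap.single (.bio b pp v (ρ τ b v) (cp ++ pos ++ [true])) := by
  induction h generalizing cp with
  | here hP => rw [pm_nil_pre hP]; simp
  | @step P f d pos b v k hP _ ih =>
    rw [pm_cons_choice hP, ih]
    simp

lemma pm_subtree {P : Proc B V} {pos : List Bool} {b : B} {v : V}
    {k : V → Proc B V} (h : ChoicePath P pos b v k) (τ : List (B × V × V))
    (pp cp : List Bool) (rest : List Bool) :
    pm ρ P τ pp cp (pos ++ true :: rest) =
      pm ρ (k (ρ τ b v)) (τ ++ [(b, v, ρ τ b v)]) (cp ++ pos ++ [true])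
        (cp ++ pos ++ [true]) rest := by
  induction h generalizing cp with
  | here hP =>
    rw [List.nil_append, pm_cons_pre_true hP]
    simp
  | @step P f d pos b v k hP _ ih =>
    rw [List.cons_append, pm_cons_choice hP, ih]
    simp

lemma gmod_token (P : Proc B V) (τ : List (B × V × V)) (pp cp : List Bool)
    (t : List Bool) : gmod ρ P τ pp cp (.token t) = 0 :=
  hSum_apply_eq_zero fun pos => pm_token P τ pp cp pos t

/-! ### misc lemmas -/

lemma prefix_append_cancel {l a b : List Bool} (h : l ++ a <+: l ++ b) : a <+: b := by
  obtain ⟨r, hr⟩ := h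
  rw [List.append_assoc] at hr
  exact ⟨r, List.append_cancel_left hr⟩

lemma single_ne_top (c c' : Chunk B V Pl) : Heap.single c c' ≠ ⊤ := by
  unfold Heap.single; split <;> simp

lemma heap_cancel_single {c : Chunk B V Pl} {x y : Heap B V Pl}
    (h : Heap.single c + x = Heap.single c + y) : x = y := by
  funext c'
  have := congrFun h c'
  exact WithTop.add_left_cancel (single_ne_top c c') this

lemma rhoWit_eq {pick : B → V → V} {σ τ : List (B × V × V)} {b : B} {v w : V}
    (h : τ ++ [(b, v, w)] <+: σ) : rhoWit pick σ τ b v = w := by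
  obtain ⟨r, hr⟩ := h
  have hdrop : σ.drop τ.length = (b, v, w) :: r := by
    rw [← hr, List.append_assoc, List.drop_left]
    rfl
  have hex : ∃ w', ∃ rest, τ <+: σ ∧ σ.drop τ.length = (b, v, w') :: rest :=
    ⟨w, r, ⟨[(b, v, w)] ++ r, by rw [← hr, List.append_assoc]⟩, hdrop⟩
  rw [rhoWit, dif_pos hex]
  obtain ⟨rest, -, hd⟩ := hex.choose_spec
  have hd' := hdrop.symm.trans hd
  injection hd' with h1 h2
  injection h1 with h3 h4
  injection h4 with h5 h6
  exact h6.symm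

/-! ### single-step simulation -/

lemma step_sim {B V : Type} {Ty : B → V → Set V} {pick : B → V → V}
    {σ τf : List (B × V × V)} {P : Proc B V} {pp cp : List Bool}
    {g : Heap B V (List Bool)} {e : B × V × V} {ho : Option (Heap B V (List Bool))}
    (hpre : τf ++ [e] <+: σ) (hpc : pp <+: cp) (hg : deadFor pp g)
    (ht : HTrans Ty (some (gmodTok (rhoWit pick σ) P τf pp cp + g)) e ho) :
    ∃ (P' : Proc B V) (pp' cp' : List Bool) (g' : Heap B V (List Bool)),
      pp' <+: cp' ∧ deadFor pp' g' ∧ PTrans Ty P e P' ∧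
        ho = some (gmodTok (rhoWit pick σ) P' (τf ++ [e]) pp' cp' + g') := by
  set ρ := rhoWit pick σ with hρ
  -- analysis common to `bio` and `contradict`
  have key : ∀ (t : List Bool) (b : B) (v w : V) (t0 : List Bool)
      (h : Heap B V (List Bool)),
      Heap.single (Chunk.token t) + Heap.single (Chunk.bio b t v w t0) + h =
        gmodTok ρ P τf pp cp + g →
      t = pp ∧ w = ρ τf b v ∧
        ∃ (pos : List Bool) (k : V → Proc B V), ChoicePath P pos b v k ∧
          t0 = cp ++ pos ++ [true] := by
    intro t b v w t0 h heq
    have htok : t = pp := by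
      have h1 := congrFun heq (Chunk.token t)
      simp only [Pi.add_apply, gmodTok, gmod_token] at h1
      by_contra hne
      rw [show (Heap.single (Chunk.token t) : Heap B V (List Bool)) (Chunk.token t) = 1 from
          by simp [Heap.single],
        show (Heap.single (Chunk.bio b t v w t0) : Heap B V (List Bool)) (Chunk.token t) = 0 from
          by simp [Heap.single],
        show (Heap.single (Chunk.token pp) : Heap B V (List Bool)) (Chunk.token t) = 0 from
          by simp [Heap.single, hne], hg.1 t] at h1
      simp at h1
    subst htok
    have hgbio : g (Chunk.bio b t v w t0) = 0 := by
      by_contra hne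
      exact hg.2 t ⟨b, v, w, t0, pos_iff_ne_zero.mpr hne⟩ (List.prefix_refl t)
    have h2 := congrFun heq (Chunk.bio b t v w t0)
    simp only [Pi.add_apply, gmodTok, hgbio,
      show (Heap.single (Chunk.token t) : Heap B V (List Bool)) (Chunk.bio b t v w t0) = 0 from
        by simp [Heap.single],
      show (Heap.single (Chunk.bio b t v w t0) : Heap B V (List Bool))
          (Chunk.bio b t v w t0) = 1 from by simp [Heap.single]] at h2
    have hpos : 0 < gmod ρ P τf t cp (Chunk.bio b t v w t0) := by
      rw [pos_iff_ne_zero]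
      intro h0
      rw [h0] at h2
      simp at h2
    obtain ⟨pos, hpm⟩ := exists_pos_of_hSum_pos hpos
    rcases pm_bio_char hpc hpm with ⟨-, k, hcp, hw, ht0⟩ | ⟨q, -, htq⟩
    · exact ⟨rfl, hw, pos, k, hcp, ht0⟩
    · exfalso
      have hlen : t.length ≤ cp.length := hpc.length_le
      have hlen2 := congrArg List.length htq
      simp only [List.length_append, List.length_cons, List.length_nil] at hlen2
      omega
  generalize hX : gmodTok ρ P τf pp cp + g = X at ht
  cases ht with
  | contradict hne hw hw' =>
    rename_i b v w w' t t0 h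
    have heq := hX.symm
    exfalso
    obtain ⟨-, hwρ, -⟩ := key t b v w t0 h heq
    have : ρ τf b v = w' := rhoWit_eq hpre
    exact hne (hwρ.trans this)
  | bio hw =>
    rename_i b v w t t0 h
    have heq := hX.symm
    obtain ⟨ht, hwρ, pos, k, hcp, ht0⟩ := key t b v w t0 h heq
    subst ht
    -- the new previous/current place
    set np : List Bool := cp ++ pos ++ [true] with hnp
    -- the residual mask heap
    set mask : Heap B V (List Bool) :=
      hSum (fun p : List Bool =>
        if p = pos ∨ pos ++ [true] <+: p then 0 else pm ρ P τf t cp p) with hmask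
    -- splitting of gmod
    have hsplit : gmod ρ P τf t cp =
        Heap.single (Chunk.bio b t v w t0) +
          (gmod ρ (k w) (τf ++ [(b, v, w)]) np np + mask) := by
      have s1 := hSum_split (fun p : List Bool => p = pos)
        (fun p => pm ρ P τf t cp p)
      have s2 := hSum_split (fun p : List Bool => pos ++ [true] <+: p)
        (fun p => if p = pos then 0 else pm ρ P τf t cp p)
      have e1 : hSum (fun p : List Bool => if p = pos then pm ρ P τf t cp p else 0) =
          Heap.single (Chunk.bio b t v w t0) := by
        rw [hSum_ite_eq pos (fun p => pm ρ P τf t cp p), pm_at_choicePath hcp, ← hwρ, ht0, hnp]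
      have e2 : hSum (fun p : List Bool =>
          if pos ++ [true] <+: p then (if p = pos then 0 else pm ρ P τf t cp p) else 0) =
          gmod ρ (k w) (τf ++ [(b, v, w)]) np np := by
        have hinj : Function.Injective (fun rest : List Bool => pos ++ true :: rest) :=
          fun x y hxy => by simpa using hxy
        rw [hSum_comp_inj _ hinj _ ?_]
        · apply congrArg hSum
          funext rest
          have hsub : pos ++ [true] <+: pos ++ true :: rest :=
            ⟨rest, by simp⟩
          have hne : ¬ pos ++ true :: rest = pos := by
            intro hp
            have := congrArg List.length hp
            simp at this
          rw [if_pos hsub, if_neg hne, pm_subtree hcp, ← hwρ, hnp]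
        · intro p hp
          rcases Classical.em (pos ++ [true] <+: p) with hsub | hsub
          · exfalso
            obtain ⟨r, hr⟩ := hsub
            exact hp ⟨r, by rw [← hr]; simp⟩
          · rw [if_neg hsub]
      have e3 : (fun p : List Bool =>
          if pos ++ [true] <+: p then 0 else (if p = pos then 0 else pm ρ P τf t cp p)) =
          (fun p : List Bool =>
            if p = pos ∨ pos ++ [true] <+: p then 0 else pm ρ P τf t cp p) := by
        funext p
        by_cases h1 : pos ++ [true] <+: p <;> by_cases h2 : p = pos <;>
          simp [h1, h2]
      calc gmod ρ P τf t cp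
          = hSum (fun p : List Bool => if p = pos then pm ρ P τf t cp p else 0) +
            hSum (fun p : List Bool => if p = pos then 0 else pm ρ P τf t cp p) := s1
        _ = Heap.single (Chunk.bio b t v w t0) +
            (gmod ρ (k w) (τf ++ [(b, v, w)]) np np + mask) := by
            rw [e1, s2, e2, hmask, ← e3]
    -- deadness of the new frame heap
    have hppnp : t <+: np := hpc.trans ⟨pos ++ [true], by simp [hnp]⟩
    have hdead : deadFor np (g + mask) := by
      constructor
      · intro tk
        have hmz : mask (Chunk.token tk) = 0 := by
          rw [hmask]
          refine hSum_apply_eq_zero fun p => ?_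
          split
          · rfl
          · exact pm_token P τf t cp p tk
        simp [Pi.add_apply, hg.1 tk, hmz]
      · rintro s ⟨b2, v2, w2, t2, hs⟩ hnps
        simp only [Pi.add_apply] at hs
        have : 0 < g (Chunk.bio b2 s v2 w2 t2) ∨ 0 < mask (Chunk.bio b2 s v2 w2 t2) := by
          by_contra hc
          push_neg at hc
          rw [le_antisymm hc.1 zero_le, le_antisymm hc.2 zero_le] at hs
          simp at hs
        rcases this with hgs | hms
        · exact hg.2 s ⟨b2, v2, w2, t2, hgs⟩ (hppnp.trans hnps)
        · rw [hmask] at hms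
          obtain ⟨p, hp⟩ := exists_pos_of_hSum_pos hms
          by_cases hcnd : p = pos ∨ pos ++ [true] <+: p
          · rw [if_pos hcnd] at hp; simp at hp
          · rw [if_neg hcnd] at hp
            push_neg at hcnd
            rcases pm_bio_char hpc hp with ⟨hspp, -⟩ | ⟨q, hq, hsq⟩
            · subst hspp
              have h1 : np.length ≤ s.length := hnps.length_le
              have h2 : s.length ≤ cp.length := hpc.length_le
              rw [hnp] at h1
              simp at h1
              omega
            · rw [hsq] at hnps
              have h1 : cp ++ (pos ++ [true]) <+: cp ++ (q ++ [true]) := by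
                simpa [hnp, List.append_assoc] using hnps
              exact hcnd.2 ((prefix_append_cancel h1).trans hq)
    -- reassembling the heap
    refine ⟨k w, np, np, g + mask, List.prefix_refl np, hdead, hcp.ptrans hw, ?_⟩
    congr 1
    have hc1 : Heap.single (Chunk.token t) + (Heap.single (Chunk.bio b t v w t0) + h) =
        Heap.single (Chunk.token t) + (gmod ρ P τf t cp + g) := by
      rw [← add_assoc, ← add_assoc]
      exact heq
    have hbh := heap_cancel_single hc1
    rw [hsplit, add_assoc, add_assoc] at hbh
    have hh := heap_cancel_single hbh
    rw [ht0, hh]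
    simp only [gmodTok]
    abel

end Helpers

/-- Canonical heap trace simulation: a trace of a token-added canonical model
under the witness schedule (plus a dead heap) is matched by a process execution
and leads again to a token-added canonical model plus a dead heap; in
particular, the reached state is not ⊥. -/
theorem canonical_heap_trace_simulation {B V : Type} (Ty : B → V → Set V)
    (pick : B → V → V) (hpick : ∀ b v, pick b v ∈ Ty b v)
    (σ τ τ' : List (B × V × V)) (P : Proc B V) (pp cp : List Bool)
    (g : Heap B V (List Bool)) (ho : Option (Heap B V (List Bool)))
    (hpre : (τ ++ τ') <+: σ) (hpc : pp <+: cp) (hg : deadFor pp g)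
    (ht : (hES Ty).mtrans (some (gmodTok (rhoWit pick σ) P τ pp cp + g)) τ' ho) :
    ∃ (P' : Proc B V) (pp' cp' : List Bool) (g' : Heap B V (List Bool)),
      pp' <+: cp' ∧ deadFor pp' g' ∧ (pES Ty).mtrans P τ' P' ∧
        ho = some (gmodTok (rhoWit pick σ) P' (τ ++ τ') pp' cp' + g') := by
  revert hpre
  induction ht with
  | nil =>
    intro hpre
    exact ⟨P, pp, cp, g, hpc, hg, .nil P, by simp⟩
  | snoc h1 h2 ih =>
    rename_i s' s'' τ0 e
    intro hpre
    have hpre' : (τ ++ τ0) ++ [e] <+: σ := by rwa [List.append_assoc]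
    have hpre0 : τ ++ τ0 <+: σ := (List.prefix_append (τ ++ τ0) [e]).trans hpre'
    obtain ⟨P1, pp1, cp1, g1, hpc1, hg1, hm1, heq1⟩ := ih hpre0
    rw [heq1] at h2
    obtain ⟨P2, pp2, cp2, g2, hpc2, hg2, hstep, heq2⟩ :=
      step_sim hpre' hpc1 hg1 h2
    exact ⟨P2, pp2, cp2, g2, hpc2, hg2, .snoc hm1 hstep,
      by rw [heq2, List.append_assoc]⟩
end

section
/- Correctness of the process-to-separation-logic translation: for every process P, the traces of P (under the process operational semantics) coincide exactly with the traces of its I/O specification: traces(P) = tracesH(emb(P)). -/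
/-! ## Auxiliary development -/

namespace ProcAux

open PFunctor

variable {B V Pl : Type}

/-! ### Satisfaction machinery -/

theorem satF_mono {Ty : B → V → Set V} {R S : Heap B V Pl → Assn B V Pl → Prop}
    {h : Heap B V Pl} {φ : Assn B V Pl} (hs : SatF Ty R h φ)
    (hRS : ∀ h' φ', R h' φ' → S h' φ') : SatF Ty S h φ := by
  unfold SatF at hs ⊢
  rcases hd : PFunctor.M.dest φ with ⟨a, f⟩
  rw [hd] at hs
  cases a <;> simp_all <;> tauto

theorem sat_dest {Ty : B → V → Set V} {h : Heap B V Pl} {φ : Assn B V Pl}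
    (hs : sat Ty h φ) : SatF Ty (sat Ty) h φ := by
  obtain ⟨R, hpost, hR⟩ := hs
  exact satF_mono (hpost _ _ hR) (fun h' φ' hr => ⟨R, hpost, hr⟩)

theorem sat_intro {Ty : B → V → Set V} {h : Heap B V Pl} {φ : Assn B V Pl}
    (hs : SatF Ty (sat Ty) h φ) : sat Ty h φ :=
  ⟨SatF Ty (sat Ty), fun _ _ h'' => satF_mono h'' (fun _ _ hr => sat_dest hr), hs⟩

/-! ### Destructor computations for `embA` -/

theorem dest_embA_null {P : Proc B V} {t : Pl}
    (hd : PFunctor.M.dest P = ⟨.null, fun e => e.elim⟩) :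
    PFunctor.M.dest (embA P t : Assn B V Pl)
      = ⟨.bool true, PFunctor.M.corec embStep ∘ fun e : Empty => e.elim⟩ := by
  rw [embA, PFunctor.M.dest_corec]
  simp only [embStep, hd, PFunctor.map_eq]
  congr

theorem dest_embA_pre {P : Proc B V} {b : B} {v : V} {k : V → Proc B V} {t : Pl}
    (hd : PFunctor.M.dest P = ⟨.pre b v, k⟩) :
    PFunctor.M.dest (embA P t : Assn B V Pl)
      = ⟨.expl, fun t' => PFunctor.M.corec embStep (.ex1 b v k t t')⟩ := by
  rw [embA, PFunctor.M.dest_corec]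
  simp only [embStep, hd, PFunctor.map_eq]
  rfl

theorem dest_embA_choice {P : Proc B V} {f : Bool → Proc B V} {t : Pl}
    (hd : PFunctor.M.dest P = ⟨.choice, f⟩) :
    PFunctor.M.dest (embA P t : Assn B V Pl)
      = ⟨.star, fun x => PFunctor.M.corec embStep (.proc (f x) t)⟩ := by
  rw [embA, PFunctor.M.dest_corec]
  simp only [embStep, hd, PFunctor.map_eq]
  rfl

theorem dest_corec_ex1 {b : B} {v : V} {k : V → Proc B V} {t t' : Pl} :
    PFunctor.M.dest (PFunctor.M.corec embStep (.ex1 b v k t t') : Assn B V Pl)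
      = ⟨.exv, fun z => PFunctor.M.corec embStep (.star1 b v k t t' z)⟩ := by
  rw [PFunctor.M.dest_corec]
  simp only [embStep, PFunctor.map_eq]
  rfl

theorem dest_corec_star1 {b : B} {v : V} {k : V → Proc B V} {t t' : Pl} {z : V} :
    PFunctor.M.dest (PFunctor.M.corec embStep (.star1 b v k t t' z) : Assn B V Pl)
      = ⟨.star, fun x : Bool => PFunctor.M.corec embStep
          (if x then .leafChunk (.bio b t v z t') else .proc (k z) t')⟩ := by
  rw [PFunctor.M.dest_corec]
  simp only [embStep, PFunctor.map_eq]
  rfl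

theorem dest_corec_leaf {c : Chunk B V Pl} :
    PFunctor.M.dest (PFunctor.M.corec embStep (.leafChunk c) : Assn B V Pl)
      = ⟨.chunk c, PFunctor.M.corec embStep ∘ fun e : Empty => e.elim⟩ := by
  rw [PFunctor.M.dest_corec]
  simp only [embStep, PFunctor.map_eq]
  congr

end ProcAux

namespace ProcAux

variable {B V Pl : Type}

/-! ### Heap basics -/

theorem heap_exists_split {H : Heap B V Pl} {c : Chunk B V Pl} (h : 0 < H c) :
    ∃ H', H = Heap.single c + H' := by
  have h1 : 1 ≤ H c := Order.one_le_iff_pos.mpr h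
  obtain ⟨k, hk⟩ := exists_add_of_le h1
  classical
  refine ⟨fun c' => if c' = c then k else H c', ?_⟩
  funext c'
  by_cases hc : c' = c
  · subst hc; simp [Heap.single, Pi.add_apply, hk]
  · simp [Heap.single, Pi.add_apply, hc]

/-! ### Unfolding `sat` on `embA` -/

theorem embA_def (P : Proc B V) (t : Pl) :
    (embA P t : Assn B V Pl) = PFunctor.M.corec embStep (.proc P t) := rfl

theorem sat_embA_pre {Ty : B → V → Set V} {P : Proc B V} {b : B} {v : V}
    {k : V → Proc B V} {t : Pl} {H : Heap B V Pl}
    (hd : PFunctor.M.dest P = ⟨.pre b v, k⟩) (hs : sat Ty H (embA P t)) :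
    ∃ (t' : Pl) (z : V) (h1 h2 : Heap B V Pl), H = h1 + h2 ∧
      0 < h1 (.bio b t v z t') ∧ z ∈ Ty b v ∧ sat Ty h2 (embA (k z) t') := by
  have h1 := sat_dest hs
  unfold SatF at h1; rw [dest_embA_pre hd] at h1
  obtain ⟨t', hs2⟩ := h1
  have h2 := sat_dest hs2
  unfold SatF at h2; beta_reduce at h2; erw [dest_corec_ex1] at h2
  obtain ⟨z, hs3⟩ := h2
  have h3 := sat_dest hs3
  unfold SatF at h3; beta_reduce at h3; erw [dest_corec_star1] at h3
  obtain ⟨ha, hb, hH, hA, hB⟩ := h3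
  simp only [if_true, if_false] at hA hB
  have h4 := sat_dest hA
  unfold SatF at h4; rw [dest_corec_leaf] at h4
  exact ⟨t', z, ha, hb, hH, h4.1, h4.2, hB⟩

theorem sat_embA_choice {Ty : B → V → Set V} {P : Proc B V} {f : Bool → Proc B V}
    {t : Pl} {H : Heap B V Pl}
    (hd : PFunctor.M.dest P = ⟨.choice, f⟩) (hs : sat Ty H (embA P t)) :
    ∃ h1 h2 : Heap B V Pl, H = h1 + h2 ∧
      sat Ty h1 (embA (f true) t) ∧ sat Ty h2 (embA (f false) t) := by
  have h1 := sat_dest hs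
  unfold SatF at h1; rw [dest_embA_choice hd] at h1
  exact h1

/-! ### Simulation: processes by heap models -/

def SInv (Ty : B → V → Set V) (P : Proc B V) (s : Option (Heap B V Pl)) : Prop :=
  s = none ∨ ∃ (t : Pl) (hP hj : Heap B V Pl),
    s = some (Heap.single (.token t) + hP + hj) ∧ sat Ty hP (embA P t)

theorem ptrans_wt {Ty : B → V → Set V} {P P' : Proc B V} {a : B × V × V}
    (h : PTrans Ty P a P') : a.2.2 ∈ Ty a.1 a.2.1 := by
  induction h with
  | pref hw _ => exact hw
  | chl _ _ ih => exact ih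
  | chr _ _ ih => exact ih

theorem step_sim {Ty : B → V → Set V} {P P' : Proc B V} {a : B × V × V}
    (hPT : PTrans Ty P a P') :
    ∀ (t : Pl) (hP hj : Heap B V Pl), sat Ty hP (embA P t) →
      ∃ s', HTrans Ty (some (Heap.single (.token t) + hP + hj)) a s' ∧ SInv Ty P' s' := by
  induction hPT with
  | @pref P b v w k hw hd =>
    intro t hP hj hs
    obtain ⟨t', z, h1, h2, hH, hz, hzT, hk⟩ := sat_embA_pre hd hs
    obtain ⟨h1', rfl⟩ := heap_exists_split hz
    by_cases hzw : z = w
    · subst hzw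
      refine ⟨some (Heap.single (.token t') + (h1' + h2 + hj)), ?_, ?_⟩
      · have heq : Heap.single (.token t) + hP + hj
            = Heap.single (Chunk.token t) + Heap.single (Chunk.bio b t v z t')
              + (h1' + h2 + hj) := by rw [hH]; abel
        rw [heq]; exact HTrans.bio hw
      · exact Or.inr ⟨t', h2, h1' + hj, congrArg some (by abel), hk⟩
    · refine ⟨none, ?_, Or.inl rfl⟩
      have heq : Heap.single (.token t) + hP + hj
          = Heap.single (Chunk.token t) + Heap.single (Chunk.bio b t v z t')
            + (h1' + h2 + hj) := by rw [hH]; abel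
      rw [heq]; exact HTrans.contradict hzw hzT hw
  | @chl P P' a f hd _ ih =>
    intro t hP hj hs
    obtain ⟨h1, h2, hH, hA, _⟩ := sat_embA_choice hd hs
    obtain ⟨s', hstep, hinv⟩ := ih t h1 (h2 + hj) hA
    refine ⟨s', ?_, hinv⟩
    have heq : Heap.single (Chunk.token t) + hP + hj
        = Heap.single (Chunk.token t) + h1 + (h2 + hj) := by rw [hH]; abel
    rw [heq]; exact hstep
  | @chr P P' a f hd _ ih =>
    intro t hP hj hs
    obtain ⟨h1, h2, hH, _, hB⟩ := sat_embA_choice hd hs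
    obtain ⟨s', hstep, hinv⟩ := ih t h2 (h1 + hj) hB
    refine ⟨s', ?_, hinv⟩
    have heq : Heap.single (Chunk.token t) + hP + hj
        = Heap.single (Chunk.token t) + h2 + (h1 + hj) := by rw [hH]; abel
    rw [heq]; exact hstep

theorem multi_sim {Ty : B → V → Set V} {P Pend : Proc B V} {τ : List (B × V × V)}
    (hm : (pES Ty).mtrans P τ Pend) :
    ∀ s : Option (Heap B V Pl), SInv Ty P s →
      ∃ s', (hES Ty).mtrans s τ s' ∧ SInv Ty Pend s' := by
  induction hm with
  | nil => exact fun s hinv => ⟨s, ES.mtrans.nil s, hinv⟩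
  | @snoc P1 P2 τ e hm' hstep ih =>
    intro s hinv
    obtain ⟨s1, hmt, hinv1⟩ := ih s hinv
    rcases hinv1 with rfl | ⟨t, hP, hj, rfl, hs⟩
    · obtain ⟨b, v, w⟩ := e
      exact ⟨none, ES.mtrans.snoc hmt (HTrans.chaos (ptrans_wt hstep)), Or.inl rfl⟩
    · obtain ⟨s', hone, hinv'⟩ := step_sim hstep t hP hj hs
      exact ⟨s', ES.mtrans.snoc hmt hone, hinv'⟩

theorem sinv_of_sat {Ty : B → V → Set V} {P : Proc B V} {h : Heap B V Pl}
    (hs : sat Ty h (procAssn Pl P)) : SInv Ty P (some h) := by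
  have h1 := sat_dest hs
  unfold SatF at h1
  simp only [procAssn, Assn.expl, PFunctor.M.dest_mk] at h1
  obtain ⟨t, hs2⟩ := h1
  have h2 := sat_dest hs2
  unfold SatF at h2
  simp only [Assn.star, PFunctor.M.dest_mk] at h2
  obtain ⟨h1', h2', hH, hA, hB⟩ := h2
  simp only [if_true, if_false] at hA hB
  have h3 := sat_dest hA
  unfold SatF at h3
  simp only [Assn.mkChunk, PFunctor.M.dest_mk] at h3
  obtain ⟨h1'', rfl⟩ := heap_exists_split h3.1
  exact Or.inr ⟨t, h2', h1'', congrArg some (by rw [hH]; exact (by abel : Heap.single (Chunk.token (B := B) (V := V) (Pl := Pl) t) + h1'' + h2' = Heap.single (Chunk.token (B := B) (V := V) (Pl := Pl) t) + h2' + h1'')), hB⟩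

end ProcAux

namespace ProcAux

variable {B V : Type}

/-! ### List helpers -/

theorem list_append_cons_ne {cp : List Bool} {x y : Bool} {a b : List Bool}
    (hxy : x ≠ y) : cp ++ x :: a ≠ cp ++ y :: b := by
  intro h
  exact hxy (List.cons.injEq .. ▸ (List.append_cancel_left h) |>.1)

theorem list_append_cons_not_prefix {cp : List Bool} {x y : Bool} {a b : List Bool}
    (hxy : x ≠ y) : ¬ (cp ++ x :: a <+: cp ++ y :: b) := by
  rintro ⟨t, ht⟩
  rw [List.append_assoc, List.cons_append] at ht
  exact hxy (List.cons.injEq .. ▸ (List.append_cancel_left ht) |>.1)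

/-! ### Positions of I/O chunks in a process -/

noncomputable def chunkAt (ρ : List (B × V × V) → B → V → V) :
    Proc B V → List (B × V × V) → List Bool → List Bool → List Bool →
      Option (Chunk B V (List Bool))
  | P, τ, pp, cp, [] =>
    (match PFunctor.M.dest P with
     | ⟨.pre b v, _⟩ => some (.bio b pp v (ρ τ b v) (cp ++ [true]))
     | _ => none)
  | P, τ, pp, cp, d :: pos =>
    (match PFunctor.M.dest P, d with
     | ⟨.pre b v, k⟩, true =>
         chunkAt ρ (k (ρ τ b v)) (τ ++ [(b, v, ρ τ b v)]) (cp ++ [true]) (cp ++ [true]) pos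
     | ⟨.choice, f⟩, d' => chunkAt ρ (f d') τ pp (cp ++ [d']) pos
     | _, _ => none)

theorem chunkAt_nil_eq (ρ : List (B × V × V) → B → V → V) (P : Proc B V) (τ) (pp cp) :
    chunkAt ρ P τ pp cp [] = (match PFunctor.M.dest P with
     | ⟨.pre b v, _⟩ => some (Chunk.bio b pp v (ρ τ b v) (cp ++ [true]))
     | _ => none) := rfl

theorem chunkAt_cons_eq (ρ : List (B × V × V) → B → V → V) (P : Proc B V) (τ) (pp cp d pos) :
    chunkAt ρ P τ pp cp (d :: pos) = (match PFunctor.M.dest P, d with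
     | ⟨.pre b v, k⟩, true =>
         chunkAt ρ (k (ρ τ b v)) (τ ++ [(b, v, ρ τ b v)]) (cp ++ [true]) (cp ++ [true]) pos
     | ⟨.choice, f⟩, d' => chunkAt ρ (f d') τ pp (cp ++ [d']) pos
     | _, _ => none) := rfl

open Classical in
/-- The canonical heap: indicator of the set of chunks occurring in `P`. -/
noncomputable def hcan (ρ : List (B × V × V) → B → V → V) (P : Proc B V)
    (τ : List (B × V × V)) (pp cp : List Bool) : Heap B V (List Bool) :=
  fun c => if ∃ pos, chunkAt ρ P τ pp cp pos = some c then 1 else 0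

/-- All-choice paths to a `pre` node. -/
inductive TopPre : Proc B V → List Bool → B → V → (V → Proc B V) → Prop
  | nil {P : Proc B V} {b v k} : PFunctor.M.dest P = ⟨.pre b v, k⟩ → TopPre P [] b v k
  | cons {P : Proc B V} {f pos b v k} (x : Bool) : PFunctor.M.dest P = ⟨.choice, f⟩ →
      TopPre (f x) pos b v k → TopPre P (x :: pos) b v k

theorem chunkAt_spec {ρ : List (B × V × V) → B → V → V} :
    ∀ (pos : List Bool) (P : Proc B V) (τ : List (B × V × V)) (pp cp : List Bool)
      (c : Chunk B V (List Bool)), chunkAt ρ P τ pp cp pos = some c →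
      ∃ b t v w t', c = .bio b t v w t' ∧ t' = cp ++ pos ++ [true] ∧
        ((t = pp ∧ w = ρ τ b v ∧ ∃ k, TopPre P pos b v k) ∨
          ∃ α, t = cp ++ α ++ [true]) := by
  intro pos
  induction pos with
  | nil =>
    intro P τ pp cp c hc
    rw [chunkAt_nil_eq] at hc
    rcases hd : PFunctor.M.dest P with ⟨hdh, f⟩
    rw [hd] at hc
    cases hdh with
    | null => exact absurd (show none = some c from hc).symm (Option.some_ne_none c)
    | choice => exact absurd (show none = some c from hc).symm (Option.some_ne_none c)
    | pre b v =>
      refine ⟨b, pp, v, ρ τ b v, cp ++ [true], (Option.some.inj hc).symm, by simp, ?_⟩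
      exact Or.inl ⟨rfl, rfl, f, TopPre.nil hd⟩
  | cons d pos' ih =>
    intro P τ pp cp c hc
    rw [chunkAt_cons_eq] at hc
    rcases hd : PFunctor.M.dest P with ⟨hdh, f⟩
    rw [hd] at hc
    cases hdh with
    | null => exact absurd (show none = some c from hc).symm (Option.some_ne_none c)
    | pre b0 v0 =>
      cases d with
      | false => exact absurd (show none = some c from hc).symm (Option.some_ne_none c)
      | true =>
        obtain ⟨b, t, v, w, t', hceq, ht', hdisj⟩ := ih _ _ _ _ _ hc
        refine ⟨b, t, v, w, t', hceq, by rw [ht']; simp, ?_⟩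
        right
        rcases hdisj with ⟨ht, _, _⟩ | ⟨α, ht⟩
        · exact ⟨[], by simpa using ht⟩
        · exact ⟨true :: α, by simpa [List.append_assoc] using ht⟩
    | choice =>
      obtain ⟨b, t, v, w, t', hceq, ht', hdisj⟩ := ih _ _ _ _ _ hc
      refine ⟨b, t, v, w, t', hceq, by rw [ht']; simp, ?_⟩
      rcases hdisj with ⟨ht, hw, k, htp⟩ | ⟨α, ht⟩
      · exact Or.inl ⟨ht, hw, k, TopPre.cons d hd htp⟩
      · exact Or.inr ⟨d :: α, by simpa [List.append_assoc] using ht⟩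

theorem hcan_pos_iff {ρ : List (B × V × V) → B → V → V} {P : Proc B V} {τ pp cp c} :
    0 < hcan ρ P τ pp cp c ↔ ∃ pos, chunkAt ρ P τ pp cp pos = some c := by
  classical
  by_cases h : ∃ pos, chunkAt ρ P τ pp cp pos = some c <;> simp [hcan, h]

theorem hcan_token {ρ : List (B × V × V) → B → V → V} {P : Proc B V} {τ pp cp s} :
    hcan ρ P τ pp cp (.token s) = 0 := by
  rw [hcan, if_neg]
  rintro ⟨pos, hp⟩
  obtain ⟨b, t, v, w, t', hceq, -, -⟩ := chunkAt_spec pos _ _ _ _ _ hp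
  exact absurd hceq (by simp)

open Classical in
theorem ite_or_split {p q : Prop} (h : ¬(p ∧ q)) :
    (if p ∨ q then (1 : ℕ∞) else 0) = (if p then 1 else 0) + (if q then 1 else 0) := by
  by_cases hp : p <;> by_cases hq : q <;> simp [hp, hq]
  exact absurd ⟨hp, hq⟩ h

theorem hcan_choice {ρ : List (B × V × V) → B → V → V} {P : Proc B V}
    {f : Bool → Proc B V} {τ pp cp} (hd : PFunctor.M.dest P = ⟨.choice, f⟩) :
    hcan ρ P τ pp cp
      = hcan ρ (f true) τ pp (cp ++ [true]) + hcan ρ (f false) τ pp (cp ++ [false]) := by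
  classical
  funext c
  have hiff : (∃ pos, chunkAt ρ P τ pp cp pos = some c) ↔
      ((∃ pos, chunkAt ρ (f true) τ pp (cp ++ [true]) pos = some c) ∨
        (∃ pos, chunkAt ρ (f false) τ pp (cp ++ [false]) pos = some c)) := by
    constructor
    · rintro ⟨pos, hp⟩
      cases pos with
      | nil => rw [chunkAt_nil_eq, hd] at hp; exact absurd (show none = some c from hp).symm (Option.some_ne_none c)
      | cons d pos' =>
        rw [chunkAt_cons_eq, hd] at hp
        cases d
        · exact Or.inr ⟨pos', hp⟩
        · exact Or.inl ⟨pos', hp⟩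
    · rintro (⟨pos, hp⟩ | ⟨pos, hp⟩)
      · exact ⟨true :: pos, by rw [chunkAt_cons_eq, hd]; exact hp⟩
      · exact ⟨false :: pos, by rw [chunkAt_cons_eq, hd]; exact hp⟩
  have hdisj : ¬ ((∃ pos, chunkAt ρ (f true) τ pp (cp ++ [true]) pos = some c) ∧
      (∃ pos, chunkAt ρ (f false) τ pp (cp ++ [false]) pos = some c)) := by
    rintro ⟨⟨p1, h1⟩, ⟨p2, h2⟩⟩
    obtain ⟨b1, t1, v1, w1, t1', hceq1, ht1, -⟩ := chunkAt_spec p1 _ _ _ _ _ h1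
    obtain ⟨b2, t2, v2, w2, t2', hceq2, ht2, -⟩ := chunkAt_spec p2 _ _ _ _ _ h2
    rw [hceq1] at hceq2
    have ht : t1' = t2' := by injection hceq2
    rw [ht1, ht2] at ht
    rw [List.append_assoc, List.append_assoc, List.append_assoc, List.append_assoc,
      List.singleton_append, List.singleton_append] at ht
    exact list_append_cons_ne (by simp) ht
  show (if _ then (1:ℕ∞) else 0) = (if _ then (1:ℕ∞) else 0) + (if _ then (1:ℕ∞) else 0)
  rw [if_congr hiff rfl rfl]
  exact ite_or_split hdisj

theorem hcan_pre {ρ : List (B × V × V) → B → V → V} {P : Proc B V} {b : B} {v : V}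
    {k : V → Proc B V} {τ pp cp} (hd : PFunctor.M.dest P = ⟨.pre b v, k⟩) :
    hcan ρ P τ pp cp
      = Heap.single (.bio b pp v (ρ τ b v) (cp ++ [true]))
        + hcan ρ (k (ρ τ b v)) (τ ++ [(b, v, ρ τ b v)]) (cp ++ [true]) (cp ++ [true]) := by
  classical
  funext c
  have hiff : (∃ pos, chunkAt ρ P τ pp cp pos = some c) ↔
      (c = Chunk.bio b pp v (ρ τ b v) (cp ++ [true]) ∨
        (∃ pos, chunkAt ρ (k (ρ τ b v)) (τ ++ [(b, v, ρ τ b v)])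
          (cp ++ [true]) (cp ++ [true]) pos = some c)) := by
    constructor
    · rintro ⟨pos, hp⟩
      cases pos with
      | nil =>
        rw [chunkAt_nil_eq, hd] at hp
        exact Or.inl (Option.some.inj hp).symm
      | cons d pos' =>
        rw [chunkAt_cons_eq, hd] at hp
        cases d
        · exact absurd (show none = some c from hp).symm (Option.some_ne_none c)
        · exact Or.inr ⟨pos', hp⟩
    · rintro (rfl | ⟨pos, hp⟩)
      · exact ⟨[], by rw [chunkAt_nil_eq, hd]⟩
      · exact ⟨true :: pos, by rw [chunkAt_cons_eq, hd]; exact hp⟩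
  have hdisj : ¬ (c = Chunk.bio b pp v (ρ τ b v) (cp ++ [true]) ∧
      (∃ pos, chunkAt ρ (k (ρ τ b v)) (τ ++ [(b, v, ρ τ b v)])
        (cp ++ [true]) (cp ++ [true]) pos = some c)) := by
    rintro ⟨rfl, ⟨p2, h2⟩⟩
    obtain ⟨b2, t2, v2, w2, t2', hceq2, ht2, -⟩ := chunkAt_spec p2 _ _ _ _ _ h2
    have ht : cp ++ [true] = t2' := by injection hceq2
    rw [ht2] at ht
    have := congrArg List.length ht
    simp at this
  have hsingle : Heap.single (Chunk.bio b pp v (ρ τ b v) (cp ++ [true])) c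
      = (if c = Chunk.bio b pp v (ρ τ b v) (cp ++ [true]) then (1:ℕ∞) else 0) := by
    simp [Heap.single]
  show (if _ then (1:ℕ∞) else 0) = _
  rw [Pi.add_apply, hsingle, hcan, if_congr hiff rfl rfl]
  exact ite_or_split hdisj

end ProcAux

namespace ProcAux

variable {B V : Type}

inductive CanR (Ty : B → V → Set V) (ρ : List (B × V × V) → B → V → V) :
    Heap B V (List Bool) → Assn B V (List Bool) → Prop
  | proc (P : Proc B V) (τ) (pp cp : List Bool) :
      CanR Ty ρ (hcan ρ P τ pp cp) (PFunctor.M.corec embStep (.proc P pp))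
  | ex1 (b : B) (v : V) (k : V → Proc B V) (τ) (pp cp : List Bool) :
      CanR Ty ρ (hcan ρ (PFunctor.M.mk (⟨ProcHead.pre b v, k⟩ : (ProcF B V).Obj (Proc B V))) τ pp cp)
        (PFunctor.M.corec embStep (.ex1 b v k pp (cp ++ [true])))
  | star1 (b : B) (v : V) (k : V → Proc B V) (τ) (pp cp : List Bool) :
      CanR Ty ρ (hcan ρ (PFunctor.M.mk (⟨ProcHead.pre b v, k⟩ : (ProcF B V).Obj (Proc B V))) τ pp cp)
        (PFunctor.M.corec embStep (.star1 b v k pp (cp ++ [true]) (ρ τ b v)))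
  | leaf (b : B) (t : List Bool) (v w : V) (t' : List Bool) (hw : w ∈ Ty b v) :
      CanR Ty ρ (Heap.single (.bio b t v w t'))
        (PFunctor.M.corec embStep (.leafChunk (.bio b t v w t')))

theorem canR_post {Ty : B → V → Set V} {ρ} (hρ : schedWT Ty ρ) :
    ∀ h φ, CanR Ty ρ h φ → SatF Ty (CanR Ty ρ) h φ := by
  intro h φ hR
  cases hR with
  | proc P τ pp cp =>
    rcases hd : PFunctor.M.dest P with ⟨hdh, f⟩
    cases hdh with
    | null =>
      have hd' : PFunctor.M.dest P = ⟨.null, fun e => e.elim⟩ := by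
        rw [hd]; congr; funext e; exact e.elim
      unfold SatF
      rw [show PFunctor.M.corec embStep (EmbSt.proc P pp) = embA P pp from rfl,
        dest_embA_null hd']
    | pre b v =>
      have hP : P = PFunctor.M.mk (⟨ProcHead.pre b v, f⟩ : (ProcF B V).Obj (Proc B V)) := by
        rw [← PFunctor.M.mk_dest P, hd]; rfl
      unfold SatF
      rw [show PFunctor.M.corec embStep (EmbSt.proc P pp) = embA P pp from rfl,
        dest_embA_pre hd]
      refine ⟨cp ++ [true], ?_⟩
      rw [hP]
      exact CanR.ex1 b v f τ pp cp
    | choice =>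
      unfold SatF
      rw [show PFunctor.M.corec embStep (EmbSt.proc P pp) = embA P pp from rfl,
        dest_embA_choice hd]
      exact ⟨_, _, hcan_choice hd, CanR.proc (f true) τ pp (cp ++ [true]),
        CanR.proc (f false) τ pp (cp ++ [false])⟩
  | ex1 b v k τ pp cp =>
    unfold SatF
    rw [dest_corec_ex1]
    exact ⟨ρ τ b v, CanR.star1 b v k τ pp cp⟩
  | star1 b v k τ pp cp =>
    unfold SatF
    rw [dest_corec_star1]
    refine ⟨_, _, hcan_pre (PFunctor.M.dest_mk _), ?_, ?_⟩
    · exact CanR.leaf b pp v (ρ τ b v) (cp ++ [true]) (hρ τ b v)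
    · exact CanR.proc (k (ρ τ b v)) (τ ++ [(b, v, ρ τ b v)]) (cp ++ [true]) (cp ++ [true])
  | leaf b t v w t' hw =>
    unfold SatF
    rw [dest_corec_leaf]
    exact ⟨by simp [Heap.single], hw⟩

theorem sat_hcan {Ty : B → V → Set V} {ρ} (hρ : schedWT Ty ρ) (P : Proc B V) (τ) (pp cp) :
    sat Ty (hcan ρ P τ pp cp) (embA P pp) :=
  ⟨CanR Ty ρ, canR_post hρ, CanR.proc P τ pp cp⟩

theorem sat_canModel {Ty : B → V → Set V} {ρ} (hρ : schedWT Ty ρ) (P : Proc B V) :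
    sat Ty (Heap.single (Chunk.token ([] : List Bool)) + hcan ρ P [] [] [])
      (procAssn (List Bool) P) := by
  apply sat_intro
  unfold SatF
  simp only [procAssn, Assn.expl, PFunctor.M.dest_mk]
  refine ⟨[], ?_⟩
  apply sat_intro
  unfold SatF
  simp only [Assn.star, PFunctor.M.dest_mk]
  refine ⟨Heap.single (.token []), hcan ρ P [] [] [], rfl, ?_, ?_⟩
  · apply sat_intro
    unfold SatF
    simp only [if_true, Assn.mkChunk, PFunctor.M.dest_mk]
    exact ⟨by unfold Heap.single; split_ifs with hc; exacts [zero_lt_one, absurd rfl hc], trivial⟩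
  · exact sat_hcan hρ P [] [] []

end ProcAux

namespace ProcAux

variable {B V : Type}

/-! ### Misc helpers -/

theorem enat_pos_add {a b : ℕ∞} (h : 0 < a + b) : 0 < a ∨ 0 < b := by
  rcases eq_zero_or_pos a with rfl | ha
  · right; simpa using h
  · exact Or.inl ha

theorem heap_cancel {Pl : Type} {a x y : Heap B V Pl} (ha : ∀ c, a c ≠ ⊤)
    (h : a + x = a + y) : x = y := by
  funext c
  exact WithTop.add_left_cancel (ha c) (congrFun h c)

theorem single_ne_top {Pl : Type} (c c' : Chunk B V Pl) : Heap.single c c' ≠ ⊤ := by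
  unfold Heap.single; split <;> simp

theorem single_apply_ne {Pl : Type} {c c' : Chunk B V Pl} (h : c' ≠ c) :
    Heap.single c c' = 0 := by
  unfold Heap.single; rw [if_neg h]

theorem mtrans_nil_inv {S E : Type} {M : ES S E} {s s' : S}
    (h : M.mtrans s [] s') : s' = s := by
  generalize hτ : ([] : List E) = l at h
  cases h with
  | nil => rfl
  | snoc h1 h2 => exact absurd hτ.symm (by simp)

theorem mtrans_snoc_inv {S E : Type} {M : ES S E} {s s'' : S} {τ : List E} {e : E}
    (h : M.mtrans s (τ ++ [e]) s'') :
    ∃ s', M.mtrans s τ s' ∧ M.trans s' e s'' := by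
  generalize hτ : τ ++ [e] = l at h
  cases h with
  | nil => exact absurd hτ (by simp)
  | @snoc s' s''' τ' e' h1 h2 =>
    obtain ⟨rfl, he⟩ := List.append_inj' hτ.symm rfl
    obtain rfl : e' = e := by simpa using he
    exact ⟨s', h1, h2⟩

theorem hcan_choice' {ρ : List (B × V × V) → B → V → V} {P : Proc B V}
    {f : Bool → Proc B V} {τ pp cp} (hd : PFunctor.M.dest P = ⟨.choice, f⟩) (x : Bool) :
    hcan ρ P τ pp cp
      = hcan ρ (f x) τ pp (cp ++ [x]) + hcan ρ (f (!x)) τ pp (cp ++ [!x]) := by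
  cases x
  · rw [hcan_choice hd, add_comm]; rfl
  · rw [hcan_choice hd]; rfl

/-! ### Decomposition of the canonical heap along a top-level `pre` position -/

theorem hcan_toppre {ρ : List (B × V × V) → B → V → V} {P : Proc B V}
    {pos : List Bool} {b : B} {v : V} {k : V → Proc B V} (hT : TopPre P pos b v k) :
    ∀ (τ : List (B × V × V)) (pp cp : List Bool),
      ∃ d : Heap B V (List Bool),
        hcan ρ P τ pp cp
          = Heap.single (.bio b pp v (ρ τ b v) (cp ++ pos ++ [true]))
            + hcan ρ (k (ρ τ b v)) (τ ++ [(b, v, ρ τ b v)])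
              (cp ++ pos ++ [true]) (cp ++ pos ++ [true]) + d ∧
        (∀ s, d (.token s) = 0) ∧
        (∀ b0 t0 v0 w0 t0', 0 < d (.bio b0 t0 v0 w0 t0') →
          t0 = pp ∨ ¬ ((cp ++ pos ++ [true]) <+: t0)) := by
  induction hT with
  | @nil P b v k hd =>
    intro τ pp cp
    refine ⟨0, ?_, fun s => rfl, fun b0 t0 v0 w0 t0' h0 => absurd h0 (lt_irrefl 0)⟩
    rw [add_zero]
    simpa using hcan_pre hd
  | @cons P f pos b v k x hd hT' ih =>
    intro τ pp cp
    obtain ⟨d', hde, hdt, hdb⟩ := ih τ pp (cp ++ [x])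
    have hx : ∀ l : List Bool, (cp ++ [x]) ++ pos ++ l = cp ++ (x :: pos) ++ l := by
      intro l; simp
    refine ⟨d' + hcan ρ (f (!x)) τ pp (cp ++ [!x]), ?_, ?_, ?_⟩
    · rw [hcan_choice' hd x, hde, hx]
      abel
    · intro s
      show d' (.token s) + hcan ρ (f (!x)) τ pp (cp ++ [!x]) (.token s) = 0
      rw [hdt s, zero_add]; exact hcan_token
    · intro b0 t0 v0 w0 t0' h0
      rcases enat_pos_add h0 with h1 | h2
      · rcases hdb _ _ _ _ _ h1 with h | h
        · exact Or.inl h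
        · right; rw [← hx]; exact h
      · obtain ⟨pos2, hp2⟩ := hcan_pos_iff.mp h2
        obtain ⟨b', t', v', w', t'', hceq, ht'', hdisj⟩ := chunkAt_spec pos2 _ _ _ _ _ hp2
        obtain ⟨rfl, rfl, rfl, rfl, rfl⟩ :
            b0 = b' ∧ t0 = t' ∧ v0 = v' ∧ w0 = w' ∧ t0' = t'' := by
          injection hceq with e1 e2 e3 e4 e5
          exact ⟨e1, e2, e3, e4, e5⟩
        rcases hdisj with ⟨ht, -, -⟩ | ⟨α, ht⟩
        · exact Or.inl ht
        · right
          subst ht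
          intro hp
          refine list_append_cons_not_prefix (cp := cp) (x := x) (y := !x)
            (a := pos ++ [true]) (b := α ++ [true]) (by cases x <;> simp) ?_
          simp [List.append_assoc] at hp

theorem toppre_ptrans {Ty : B → V → Set V} {P : Proc B V} {pos b v k}
    (hT : TopPre P pos b v k) : ∀ w, w ∈ Ty b v → PTrans Ty P (b, v, w) (k w) := by
  induction hT with
  | nil hd => exact fun w hw => PTrans.pref hw hd
  | cons x hd _ ih =>
    intro w hw
    cases x
    · exact PTrans.chr hd (ih w hw)
    · exact PTrans.chl hd (ih w hw)

/-! ### Witness schedules -/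

theorem rhoWit_eq {pick : B → V → V} {σ τ : List (B × V × V)} {b v w}
    (hpre : τ ++ [(b, v, w)] <+: σ) : rhoWit pick σ τ b v = w := by
  obtain ⟨r, hr⟩ := hpre
  rw [List.append_assoc, List.singleton_append] at hr
  have hτ : τ <+: σ := ⟨(b, v, w) :: r, hr⟩
  have hdrop : σ.drop τ.length = (b, v, w) :: r := by
    rw [← hr]; exact List.drop_left
  have hC : ∃ w', ∃ rest, τ <+: σ ∧ σ.drop τ.length = (b, v, w') :: rest := ⟨w, r, hτ, hdrop⟩
  rw [rhoWit, dif_pos hC]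
  obtain ⟨r', -, hd'⟩ := hC.choose_spec
  generalize hg : hC.choose = w' at hd' ⊢
  rw [hdrop] at hd'
  injection hd' with h1 _
  exact (congrArg (fun p : B × V × V => p.2.2) h1).symm

theorem rhoWit_WT {Ty : B → V → Set V} {pick : B → V → V} {σ : List (B × V × V)}
    (hpick : ∀ b v, pick b v ∈ Ty b v)
    (hσ : ∀ a ∈ σ, a.2.2 ∈ Ty a.1 a.2.1) : schedWT Ty (rhoWit pick σ) := by
  intro τ b v
  rw [rhoWit]
  split
  · next hC =>
    obtain ⟨r, hpre, hdrop⟩ := hC.choose_spec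
    generalize hg : hC.choose = w' at hdrop ⊢
    have hmem : (b, v, w') ∈ σ := by
      refine List.drop_subset τ.length σ ?_
      rw [hdrop]; exact List.mem_cons_self
    exact hσ _ hmem
  · exact hpick b v

theorem htrace_wt {Ty : B → V → Set V} {Pl : Type} {s s' : Option (Heap B V Pl)} {τ}
    (h : (hES Ty).mtrans s τ s') : ∀ a ∈ τ, a.2.2 ∈ Ty a.1 a.2.1 := by
  induction h with
  | nil => simp
  | snoc h1 h2 ih =>
    intro a ha
    rw [List.mem_append] at ha
    rcases ha with ha | ha
    · exact ih a ha
    · rw [List.mem_singleton] at ha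
      subst ha
      cases h2 <;> assumption

end ProcAux

namespace ProcAux

variable {B V : Type}

def JunkOK (pp : List Bool) (d : Heap B V (List Bool)) : Prop :=
  (∀ s, d (.token s) = 0) ∧
  ∀ b0 t0 v0 w0 t0', 0 < d (.bio b0 t0 v0 w0 t0') → ¬ (pp <+: t0)

theorem token_ne_token {Pl : Type} {t pp : Pl} (h : t ≠ pp) :
    (Chunk.token t : Chunk B V Pl) ≠ Chunk.token pp := by
  intro hh; injection hh with h1; exact h h1

theorem single_apply_self {Pl : Type} (c : Chunk B V Pl) : Heap.single c c = 1 := by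
  unfold Heap.single; rw [if_pos rfl]

theorem back_sim {Ty : B → V → Set V} {σ : List (B × V × V)} {pick : B → V → V}
    (P : Proc B V) :
    ∀ τ : List (B × V × V), τ <+: σ → ∀ s',
      (hES Ty).mtrans (some (Heap.single (Chunk.token ([] : List Bool)) +
        hcan (rhoWit pick σ) P [] [] [])) τ s' →
      ∃ (P' : Proc B V) (pp : List Bool) (d : Heap B V (List Bool)),
        s' = some (Heap.single (Chunk.token pp) + hcan (rhoWit pick σ) P' τ pp pp + d) ∧
        JunkOK pp d ∧ (pES Ty).mtrans P τ P' := by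
  intro τ
  induction τ using List.reverseRecOn with
  | nil =>
    intro _ s' hm
    refine ⟨P, [], 0, ?_, ⟨fun s => rfl, fun _ _ _ _ _ h0 => absurd h0 (lt_irrefl 0)⟩,
      ES.mtrans.nil P⟩
    rw [mtrans_nil_inv hm, add_zero]
  | append_singleton τ e ih =>
    intro hpre s'' hm
    obtain ⟨s1, hm1, hstep⟩ := mtrans_snoc_inv hm
    have hτpre : τ <+: σ := (List.prefix_append τ [e]).trans hpre
    obtain ⟨P', pp, d, rfl, ⟨hdt, hdb⟩, hmp⟩ := ih hτpre s1 hm1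
    obtain ⟨b, v, w⟩ := e
    have hρe : rhoWit pick σ τ b v = w := rhoWit_eq hpre
    generalize hH : Heap.single (Chunk.token pp) + hcan (rhoWit pick σ) P' τ pp pp + d
      = H0 at hstep
    cases hstep with
    | @bio _ _ _ t t' h hw =>
      -- identify the token place
      have htpp : pp = t := by
        by_contra hne0
        have h0 := congrFun hH (Chunk.token t)
        simp only [Pi.add_apply] at h0
        rw [hcan_token, hdt, single_apply_ne (token_ne_token (Ne.symm hne0)), single_apply_self,
          single_apply_ne (c := Chunk.bio b t v w t') (c' := Chunk.token t) (by simp)] at h0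
        have hlt : (0 : ℕ∞) < 1 + (0 + h (Chunk.token t)) := by
          exact lt_of_lt_of_le zero_lt_one le_self_add
        rw [← add_assoc, ← h0] at hlt
        simp at hlt
      subst htpp
      -- the consumed chunk lies in the canonical part
      have hd0 : d (Chunk.bio b pp v w t') = 0 := by
        by_contra h'
        exact hdb _ _ _ _ _ (pos_iff_ne_zero.mpr h') (List.prefix_refl pp)
      have hpos : 0 < hcan (rhoWit pick σ) P' τ pp pp (Chunk.bio b pp v w t') := by
        have h0 := congrFun hH (Chunk.bio b pp v w t')
        simp only [Pi.add_apply] at h0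
        rw [hd0, single_apply_ne (c := Chunk.token pp) (c' := Chunk.bio b pp v w t') (by simp), single_apply_self] at h0
        rw [zero_add, add_zero] at h0
        rw [h0]
        exact lt_of_lt_of_le zero_lt_one (by rw [zero_add]; exact le_self_add)
      obtain ⟨pos, hpos'⟩ := hcan_pos_iff.mp hpos
      obtain ⟨b', t2, v', w', t2', hceq, ht2', hdisj⟩ := chunkAt_spec pos _ _ _ _ _ hpos'
      obtain ⟨rfl, ht2eq, rfl, rfl, rfl⟩ :
          b = b' ∧ pp = t2 ∧ v = v' ∧ w = w' ∧ t' = t2' := by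
        injection hceq with e1 e2 e3 e4 e5
        exact ⟨e1, e2, e3, e4, e5⟩
      rcases hdisj with ⟨-, hwρ, k, hTP⟩ | ⟨α, hα⟩
      · subst ht2'
        obtain ⟨d5, hde5, hdt5, hdb5⟩ := hcan_toppre (ρ := rhoWit pick σ) hTP τ pp pp
        rw [← hwρ] at hde5
        rw [hde5] at hH
        have hL : Heap.single (Chunk.token pp)
              + (Heap.single (Chunk.bio b pp v w (pp ++ pos ++ [true]))
                + hcan (rhoWit pick σ) (k w) (τ ++ [(b, v, w)])
                    (pp ++ pos ++ [true]) (pp ++ pos ++ [true]) + d5) + d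
            = (Heap.single (Chunk.token pp)
                + Heap.single (Chunk.bio b pp v w (pp ++ pos ++ [true])))
              + (hcan (rhoWit pick σ) (k w) (τ ++ [(b, v, w)])
                  (pp ++ pos ++ [true]) (pp ++ pos ++ [true]) + d5 + d) := by abel
        rw [hL] at hH
        have hcancel := heap_cancel (fun c => by
          simp only [Pi.add_apply]
          exact WithTop.add_ne_top.mpr ⟨single_ne_top _ _, single_ne_top _ _⟩) hH
        refine ⟨k w, pp ++ pos ++ [true], d5 + d, ?_, ⟨?_, ?_⟩,
          ES.mtrans.snoc hmp (toppre_ptrans hTP w hw)⟩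
        · rw [← hcancel]
          exact congrArg some (by abel)
        · intro s
          show d5 (.token s) + d (.token s) = 0
          rw [hdt5 s, hdt s, add_zero]
        · intro b0 t0 v0 w0 t0' h0
          rcases enat_pos_add h0 with h1 | h2
          · rcases hdb5 _ _ _ _ _ h1 with rfl | hnp
            · intro hp
              have := hp.length_le
              simp at this
            · exact hnp
          · intro hp
            exact hdb _ _ _ _ _ h2 ((List.prefix_append pp (pos ++ [true])).trans
              (by simpa [List.append_assoc] using hp))
      · exfalso
        rw [← ht2eq] at hα
        have := congrArg List.length hα
        simp at this
    | @contradict _ _ wc _ t t' h hne' hwc hw =>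
      exfalso
      have htpp : pp = t := by
        by_contra hne0
        have h0 := congrFun hH (Chunk.token t)
        simp only [Pi.add_apply] at h0
        rw [hcan_token, hdt, single_apply_ne (token_ne_token (Ne.symm hne0)), single_apply_self,
          single_apply_ne (c := Chunk.bio b t v wc t') (c' := Chunk.token t) (by simp)] at h0
        have hlt : (0 : ℕ∞) < 1 + (0 + h (Chunk.token t)) := by
          exact lt_of_lt_of_le zero_lt_one le_self_add
        rw [← add_assoc, ← h0] at hlt
        simp at hlt
      subst htpp
      have hd0 : d (Chunk.bio b pp v wc t') = 0 := by
        by_contra h'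
        exact hdb _ _ _ _ _ (pos_iff_ne_zero.mpr h') (List.prefix_refl pp)
      have hpos : 0 < hcan (rhoWit pick σ) P' τ pp pp (Chunk.bio b pp v wc t') := by
        have h0 := congrFun hH (Chunk.bio b pp v wc t')
        simp only [Pi.add_apply] at h0
        rw [hd0, single_apply_ne (c := Chunk.token pp) (c' := Chunk.bio b pp v wc t') (by simp), single_apply_self] at h0
        rw [zero_add, add_zero] at h0
        rw [h0]
        exact lt_of_lt_of_le zero_lt_one (by rw [zero_add]; exact le_self_add)
      obtain ⟨pos, hpos'⟩ := hcan_pos_iff.mp hpos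
      obtain ⟨b', t2, v', w', t2', hceq, ht2', hdisj⟩ := chunkAt_spec pos _ _ _ _ _ hpos'
      obtain ⟨rfl, ht2eq, rfl, rfl, rfl⟩ :
          b = b' ∧ pp = t2 ∧ v = v' ∧ wc = w' ∧ t' = t2' := by
        injection hceq with e1 e2 e3 e4 e5
        exact ⟨e1, e2, e3, e4, e5⟩
      rcases hdisj with ⟨-, hwρ, k, hTP⟩ | ⟨α, hα⟩
      · exact hne' (hwρ.trans hρe)
      · rw [← ht2eq] at hα
        have := congrArg List.length hα
        simp at this

end ProcAux

open ProcAux in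
/-- Correctness of the process-to-separation-logic translation: the traces of a
process `P` coincide exactly with the traces of its I/O specification
`emb(P) = ∃t. token(t) ⋆ emb(P, t)`. -/
theorem proc_iospec_trace_equiv {B V : Type} (Ty : B → V → Set V)
    (hne : ∀ b v, (Ty b v).Nonempty) (P : Proc B V) :
    (pES Ty).tracesFrom P = tracesHA Ty (procAssn (List Bool) P) := by
  apply Set.eq_of_subset_of_subset
  · intro τ hτ
    simp only [ES.tracesFrom, ES.traces, Set.mem_setOf_eq, Set.mem_singleton_iff] at hτ
    obtain ⟨P0, rfl, Pend, hm⟩ := hτ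
    simp only [tracesHA, tracesH, Set.mem_setOf_eq]
    intro h hsat
    obtain ⟨s', hm', -⟩ := multi_sim hm (some h) (sinv_of_sat hsat)
    simp only [ES.tracesFrom, ES.traces, Set.mem_setOf_eq, Set.mem_singleton_iff]
    exact ⟨some h, rfl, s', hm'⟩
  · intro τ hτ
    simp only [tracesHA, tracesH, Set.mem_setOf_eq] at hτ
    have hpick : ∀ b v, (fun b v => (hne b v).choose) b v ∈ Ty b v :=
      fun b v => (hne b v).choose_spec
    set pick : B → V → V := fun b v => (hne b v).choose with hpick_def
    -- Step 1: all actions of τ are well-typed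
    have hσ0 : schedWT Ty (fun _ b v => pick b v) := fun _ b v => hpick b v
    have hm0 := hτ _ (sat_canModel hσ0 P)
    simp only [ES.tracesFrom, ES.traces, Set.mem_setOf_eq, Set.mem_singleton_iff] at hm0
    obtain ⟨s0, rfl, s0', hm0'⟩ := hm0
    have hwt : ∀ a ∈ τ, a.2.2 ∈ Ty a.1 a.2.1 := htrace_wt hm0'
    -- Step 2: run the heap system on the canonical model for the witness schedule
    have hρ : schedWT Ty (rhoWit pick τ) := rhoWit_WT hpick hwt
    have hm1 := hτ _ (sat_canModel hρ P)
    simp only [ES.tracesFrom, ES.traces, Set.mem_setOf_eq, Set.mem_singleton_iff] at hm1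
    obtain ⟨s1, rfl, s1', hm1'⟩ := hm1
    obtain ⟨P', pp, d, -, -, hmp⟩ := back_sim P τ (List.prefix_refl τ) s1' hm1'
    simp only [ES.tracesFrom, ES.traces, Set.mem_setOf_eq, Set.mem_singleton_iff]
    exact ⟨P, rfl, P', hmp⟩
end
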